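/- Let S₀ be a finite set, let p₀ : 2^{S₀} → ℝ be fully supermodular and b₀ : 2^{S₀} → ℝ be fully submodular with p₀(∅) = b₀(∅) = 0 and p₀(S₀) = b₀(S₀) = 0, and let f₀, g₀ ∈ ℝ^{S₀} with f₀ ≤ g₀. Then the set {x ∈ ℝ^{S₀} : x̃(S₀) = 0, p₀(Z) ≤ x̃(Z) and x̃(Z) ≤ b₀(Z) for every Z ⊆ S₀, and f₀ ≤ x ≤ g₀} is nonempty if and only if p₀(Y₁) + f̃₀(Y₂ − Y₁) ≤ b₀(Y₂) + g̃₀(Y₁ − Y₂) holds for every Y₁, Y₂ ⊆ S₀. -/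

import Mathlib

open Finset

/-- Frank's discrete sandwich theorem, restricted to subsets of a finset `T`. -/
lemma sandwich_aux {S : Type*} [DecidableEq S] (T : Finset S) :
    ∀ p b : Finset S → ℝ,
    (∀ X Y : Finset S, X ⊆ T → Y ⊆ T → p X + p Y ≤ p (X ∪ Y) + p (X ∩ Y)) →
    (∀ X Y : Finset S, X ⊆ T → Y ⊆ T → b (X ∪ Y) + b (X ∩ Y) ≤ b X + b Y) →
    (∀ Z ⊆ T, p Z ≤ b Z) → p ∅ ≤ 0 → 0 ≤ b ∅ →
    ∃ x : S → ℝ, ∀ Z ⊆ T, p Z ≤ ∑ s ∈ Z, x s ∧ ∑ s ∈ Z, x s ≤ b Z := by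
  induction T using Finset.induction_on with
  | empty =>
    intro p b _ _ _ hp0 hb0
    refine ⟨0, fun Z hZ => ?_⟩
    rw [Finset.subset_empty] at hZ
    subst hZ
    simpa using ⟨hp0, hb0⟩
  | @insert a T ha IH =>
    intro p b hsuper hsub hpb hp0 hb0
    have hsubT : ∀ Z : Finset S, Z ⊆ T → Z ⊆ insert a T :=
      fun Z hZ => hZ.trans (subset_insert a T)
    have hinsT : ∀ Z : Finset S, Z ⊆ T → insert a Z ⊆ insert a T :=
      fun Z hZ => insert_subset_insert a hZ
    have haX : ∀ Z : Finset S, Z ⊆ T → a ∉ Z := fun Z hZ h => ha (hZ h)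
    have hPne : (T.powerset).Nonempty := ⟨∅, by simp⟩
    set α := max ((T.powerset).sup' hPne (fun X => p (insert a X) - b X)) (p {a}) with hαdef
    -- key cross inequality
    have key : ∀ X ⊆ T, ∀ Y ⊆ T, p (insert a X) - b X ≤ b (insert a Y) - p Y := by
      intro X hX Y hY
      have h1 := hsuper (insert a X) Y (hinsT X hX) (hsubT Y hY)
      rw [insert_union, inter_comm, inter_insert_of_notMem (haX Y hY), inter_comm] at h1
      have h2 := hsub X (insert a Y) (hsubT X hX) (hinsT Y hY)
      rw [union_insert, inter_comm, insert_inter_of_notMem (haX X hX), inter_comm] at h2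
      have h3 := hpb (insert a (X ∪ Y)) (hinsT _ (union_subset hX hY))
      have h4 := hpb (X ∩ Y) (hsubT _ ((inter_subset_left).trans hX))
      linarith
    have hlb : ∀ X ⊆ T, p (insert a X) - b X ≤ α :=
      fun X hX => le_trans (le_sup' (fun X => p (insert a X) - b X) (mem_powerset.mpr hX)) (le_max_left _ _)
    have hαp : p {a} ≤ α := le_max_right _ _
    have hub : ∀ Y ⊆ T, α ≤ b (insert a Y) - p Y := by
      intro Y hY
      apply max_le
      · exact sup'_le _ _ (fun X hX => key X (mem_powerset.mp hX) Y hY)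
      · have h1 := hsuper {a} Y (by simp [Finset.singleton_subset_iff]) (hsubT Y hY)
        rw [← insert_eq, singleton_inter_of_notMem (haX Y hY)] at h1
        have h3 := hpb (insert a Y) (hinsT Y hY)
        linarith
    have hαb : α ≤ b {a} := by
      apply max_le
      · apply sup'_le
        intro X hX
        have hX := mem_powerset.mp hX
        have h2 := hsub {a} X (by simp [Finset.singleton_subset_iff]) (hsubT X hX)
        rw [← insert_eq, singleton_inter_of_notMem (haX X hX)] at h2
        have h3 := hpb (insert a X) (hinsT X hX)
        linarith
      · exact hpb {a} (by simp [Finset.singleton_subset_iff])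
    -- contracted/deleted functions
    set p' : Finset S → ℝ := fun Z => max (p Z) (p (insert a Z) - α) with hp'def
    set b' : Finset S → ℝ := fun Z => min (b Z) (b (insert a Z) - α) with hb'def
    -- monotonicity of marginal values
    have mono : ∀ U V : Finset S, U ⊆ V → V ⊆ T →
        p (insert a U) + p V ≤ p (insert a V) + p U := by
      intro U V hUV hV
      have h1 := hsuper (insert a U) V (hinsT U (hUV.trans hV)) (hsubT V hV)
      rw [insert_union, union_eq_right.mpr hUV, inter_comm,
        inter_insert_of_notMem (haX V hV), inter_comm, inter_eq_left.mpr hUV] at h1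
      linarith
    have hsuper' : ∀ X Y : Finset S, X ⊆ T → Y ⊆ T →
        p' X + p' Y ≤ p' (X ∪ Y) + p' (X ∩ Y) := by
      intro X Y hX hY
      have hins : insert a X ∪ insert a Y = insert a (X ∪ Y) := by
        rw [insert_union, union_insert, insert_idem]
      have hins2 : insert a X ∩ insert a Y = insert a (X ∩ Y) := by
        ext t
        simp only [mem_inter, mem_insert]
        tauto
      have h1 := hsuper X Y (hsubT X hX) (hsubT Y hY)
      have h2 := hsuper (insert a X) (insert a Y) (hinsT X hX) (hinsT Y hY)
      rw [hins, hins2] at h2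
      have h3 := mono Y (X ∪ Y) subset_union_right (union_subset hX hY)
      have h4 := mono X (X ∪ Y) subset_union_left (union_subset hX hY)
      have m1 : p (X ∪ Y) ≤ p' (X ∪ Y) := le_max_left _ _
      have m2 : p (insert a (X ∪ Y)) - α ≤ p' (X ∪ Y) := le_max_right _ _
      have m3 : p (X ∩ Y) ≤ p' (X ∩ Y) := le_max_left _ _
      have m4 : p (insert a (X ∩ Y)) - α ≤ p' (X ∩ Y) := le_max_right _ _
      rcases max_cases (p X) (p (insert a X) - α) with ⟨e1, _⟩ | ⟨e1, _⟩ <;>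
        rcases max_cases (p Y) (p (insert a Y) - α) with ⟨e2, _⟩ | ⟨e2, _⟩ <;>
          simp only [hp'def] at e1 e2 ⊢ <;> rw [e1, e2] <;> linarith
    have monob : ∀ U V : Finset S, U ⊆ V → V ⊆ T →
        b (insert a V) + b U ≤ b (insert a U) + b V := by
      intro U V hUV hV
      have h1 := hsub (insert a U) V (hinsT U (hUV.trans hV)) (hsubT V hV)
      rw [insert_union, union_eq_right.mpr hUV, inter_comm,
        inter_insert_of_notMem (haX V hV), inter_comm, inter_eq_left.mpr hUV] at h1
      linarith
    have hsub' : ∀ X Y : Finset S, X ⊆ T → Y ⊆ T →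
        b' (X ∪ Y) + b' (X ∩ Y) ≤ b' X + b' Y := by
      intro X Y hX hY
      have hins : insert a X ∪ insert a Y = insert a (X ∪ Y) := by
        rw [insert_union, union_insert, insert_idem]
      have hins2 : insert a X ∩ insert a Y = insert a (X ∩ Y) := by
        ext t
        simp only [mem_inter, mem_insert]
        tauto
      have h1 := hsub X Y (hsubT X hX) (hsubT Y hY)
      have h2 := hsub (insert a X) (insert a Y) (hinsT X hX) (hinsT Y hY)
      rw [hins, hins2] at h2
      have h3 := monob Y (X ∪ Y) subset_union_right (union_subset hX hY)
      have h4 := monob X (X ∪ Y) subset_union_left (union_subset hX hY)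
      have m1 : b' (X ∪ Y) ≤ b (X ∪ Y) := min_le_left _ _
      have m2 : b' (X ∪ Y) ≤ b (insert a (X ∪ Y)) - α := min_le_right _ _
      have m3 : b' (X ∩ Y) ≤ b (X ∩ Y) := min_le_left _ _
      have m4 : b' (X ∩ Y) ≤ b (insert a (X ∩ Y)) - α := min_le_right _ _
      rcases min_cases (b X) (b (insert a X) - α) with ⟨e1, _⟩ | ⟨e1, _⟩ <;>
        rcases min_cases (b Y) (b (insert a Y) - α) with ⟨e2, _⟩ | ⟨e2, _⟩ <;>
          simp only [hb'def] at e1 e2 ⊢ <;> rw [e1, e2] <;> linarith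
    have hpb' : ∀ Z ⊆ T, p' Z ≤ b' Z := by
      intro Z hZ
      apply max_le <;> apply le_min
      · exact hpb Z (hsubT Z hZ)
      · have := hub Z hZ; linarith
      · have := hlb Z hZ; linarith
      · have := hpb (insert a Z) (hinsT Z hZ); linarith
    have hp0' : p' ∅ ≤ 0 := by
      apply max_le hp0
      rw [insert_empty]
      linarith
    have hb0' : (0 : ℝ) ≤ b' ∅ := by
      apply le_min hb0
      rw [insert_empty]
      linarith
    obtain ⟨x₀, hx₀⟩ := IH p' b' hsuper' hsub' hpb' hp0' hb0'
    refine ⟨Function.update x₀ a α, fun Z hZ => ?_⟩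
    by_cases haZ : a ∈ Z
    · have hZ' : Z.erase a ⊆ T := Finset.subset_insert_iff.mp hZ
      have hsum : ∑ s ∈ Z, Function.update x₀ a α s = α + ∑ s ∈ Z.erase a, x₀ s := by
        rw [← Finset.add_sum_erase Z _ haZ, Function.update_self]
        congr 1
        exact Finset.sum_congr rfl fun s hs =>
          Function.update_of_ne (Finset.ne_of_mem_erase hs) _ _
      obtain ⟨h1, h2⟩ := hx₀ (Z.erase a) hZ'
      have hins : insert a (Z.erase a) = Z := Finset.insert_erase haZ
      have h1' : p (insert a (Z.erase a)) - α ≤ ∑ s ∈ Z.erase a, x₀ s :=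
        le_trans (le_max_right _ _) h1
      have h2' : ∑ s ∈ Z.erase a, x₀ s ≤ b (insert a (Z.erase a)) - α :=
        le_trans h2 (min_le_right _ _)
      rw [hins] at h1' h2'
      rw [hsum]
      constructor <;> linarith
    · have hZ' : Z ⊆ T := by
        intro s hs
        rcases Finset.mem_insert.mp (hZ hs) with h | h
        · exact absurd (h ▸ hs) haZ
        · exact h
      have hsum : ∑ s ∈ Z, Function.update x₀ a α s = ∑ s ∈ Z, x₀ s :=
        Finset.sum_congr rfl fun s hs =>
          Function.update_of_ne (by rintro rfl; exact haZ hs) _ _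
      obtain ⟨h1, h2⟩ := hx₀ Z hZ'
      rw [hsum]
      exact ⟨le_trans (le_max_left _ _) h1, le_trans h2 (min_le_left _ _)⟩

/-- feasibility of the intersection of two 0-base-polyhedra
with a box (Proposition on p₀, b₀, f₀, g₀). -/
theorem stmt_3 {S : Type*} [Fintype S] [DecidableEq S]
    (p b : Finset S → ℝ) (hp0 : p ∅ = 0) (hb0 : b ∅ = 0)
    (hsuper : ∀ X Y : Finset S, p X + p Y ≤ p (X ∪ Y) + p (X ∩ Y))
    (hsub : ∀ X Y : Finset S, b (X ∪ Y) + b (X ∩ Y) ≤ b X + b Y)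
    (hpS : p Finset.univ = 0) (hbS : b Finset.univ = 0)
    (f g : S → ℝ) (hfg : ∀ s, f s ≤ g s) :
    (∃ x : S → ℝ, (∑ s, x s) = 0 ∧
        (∀ Z : Finset S, p Z ≤ ∑ s ∈ Z, x s ∧ ∑ s ∈ Z, x s ≤ b Z) ∧
        (∀ s, f s ≤ x s ∧ x s ≤ g s)) ↔
      (∀ Y₁ Y₂ : Finset S,
        p Y₁ + ∑ s ∈ Y₂ \ Y₁, f s ≤ b Y₂ + ∑ s ∈ Y₁ \ Y₂, g s) := by
  constructor
  · rintro ⟨x, hxsum, hxZ, hxfg⟩ Y₁ Y₂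
    have s1 : ∑ i ∈ Y₁ ∩ Y₂, x i + ∑ i ∈ Y₁ \ Y₂, x i = ∑ i ∈ Y₁, x i :=
      Finset.sum_inter_add_sum_sdiff Y₁ Y₂ x
    have s2 : ∑ i ∈ Y₂ ∩ Y₁, x i + ∑ i ∈ Y₂ \ Y₁, x i = ∑ i ∈ Y₂, x i :=
      Finset.sum_inter_add_sum_sdiff Y₂ Y₁ x
    rw [inter_comm] at s2
    have h1 : p Y₁ ≤ ∑ i ∈ Y₁, x i := (hxZ Y₁).1
    have h2 : ∑ i ∈ Y₂, x i ≤ b Y₂ := (hxZ Y₂).2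
    have h3 : ∑ s ∈ Y₂ \ Y₁, f s ≤ ∑ s ∈ Y₂ \ Y₁, x s :=
      Finset.sum_le_sum fun s _ => (hxfg s).1
    have h4 : ∑ s ∈ Y₁ \ Y₂, x s ≤ ∑ s ∈ Y₁ \ Y₂, g s :=
      Finset.sum_le_sum fun s _ => (hxfg s).2
    linarith
  · intro hcond
    have hne : (Finset.univ : Finset (Finset S)).Nonempty := univ_nonempty
    set q : Finset S → ℝ := fun X =>
      (Finset.univ : Finset (Finset S)).sup'
        hne (fun Y => p Y + ∑ s ∈ X \ Y, f s - ∑ s ∈ Y \ X, g s) with hqdef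
    have hqX : ∀ X : Finset S, q X = (Finset.univ : Finset (Finset S)).sup'
        hne (fun Y => p Y + ∑ s ∈ X \ Y, f s - ∑ s ∈ Y \ X, g s) :=
      fun X => congrFun hqdef X
    have hqle : ∀ X, q X ≤ b X := by
      intro X
      rw [hqX X]
      apply sup'_le
      intro Y _
      have := hcond Y X
      linarith
    have hqge : ∀ X, p X ≤ q X := by
      intro X
      rw [hqX X]
      refine le_trans ?_ (le_sup' (fun Y => p Y + ∑ s ∈ X \ Y, f s - ∑ s ∈ Y \ X, g s)
        (Finset.mem_univ X))
      simp
    -- supermodularity of q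
    have hqsuper : ∀ A B : Finset S, q A + q B ≤ q (A ∪ B) + q (A ∩ B) := by
      intro A B
      obtain ⟨YA, _, hYA⟩ := Finset.exists_mem_eq_sup' hne
        (fun Y => p Y + ∑ s ∈ A \ Y, f s - ∑ s ∈ Y \ A, g s)
      obtain ⟨YB, _, hYB⟩ := Finset.exists_mem_eq_sup' hne
        (fun Y => p Y + ∑ s ∈ B \ Y, f s - ∑ s ∈ Y \ B, g s)
      have hU : p (YA ∪ YB) + ∑ s ∈ (A ∪ B) \ (YA ∪ YB), f s
          - ∑ s ∈ (YA ∪ YB) \ (A ∪ B), g s ≤ q (A ∪ B) := by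
        rw [hqX]
        exact le_sup' (fun Y => p Y + ∑ s ∈ (A ∪ B) \ Y, f s - ∑ s ∈ Y \ (A ∪ B), g s)
          (Finset.mem_univ (YA ∪ YB))
      have hI : p (YA ∩ YB) + ∑ s ∈ (A ∩ B) \ (YA ∩ YB), f s
          - ∑ s ∈ (YA ∩ YB) \ (A ∩ B), g s ≤ q (A ∩ B) := by
        rw [hqX]
        exact le_sup' (fun Y => p Y + ∑ s ∈ (A ∩ B) \ Y, f s - ∑ s ∈ Y \ (A ∩ B), g s)
          (Finset.mem_univ (YA ∩ YB))
      have hps := hsuper YA YB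
      have conv : ∀ (Z : Finset S) (v : S → ℝ),
          ∑ s ∈ Z, v s = ∑ s ∈ univ, if s ∈ Z then v s else 0 := by
        intro Z v
        rw [Finset.sum_ite_mem, univ_inter]
      have keysum :
          ∑ s ∈ A \ YA, f s + ∑ s ∈ B \ YB, f s
            + ∑ s ∈ (YA ∪ YB) \ (A ∪ B), g s + ∑ s ∈ (YA ∩ YB) \ (A ∩ B), g s
          ≤ ∑ s ∈ (A ∪ B) \ (YA ∪ YB), f s + ∑ s ∈ (A ∩ B) \ (YA ∩ YB), f s
            + ∑ s ∈ YA \ A, g s + ∑ s ∈ YB \ B, g s := by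
        rw [conv (A \ YA) f, conv (B \ YB) f, conv ((YA ∪ YB) \ (A ∪ B)) g,
          conv ((YA ∩ YB) \ (A ∩ B)) g, conv ((A ∪ B) \ (YA ∪ YB)) f,
          conv ((A ∩ B) \ (YA ∩ YB)) f, conv (YA \ A) g, conv (YB \ B) g,
          ← Finset.sum_add_distrib, ← Finset.sum_add_distrib,
          ← Finset.sum_add_distrib, ← Finset.sum_add_distrib,
          ← Finset.sum_add_distrib, ← Finset.sum_add_distrib]
        apply Finset.sum_le_sum
        intro s _
        by_cases h1 : s ∈ A <;> by_cases h2 : s ∈ B <;>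
          by_cases h3 : s ∈ YA <;> by_cases h4 : s ∈ YB <;>
            simp [Finset.mem_sdiff, Finset.mem_union, Finset.mem_inter,
              h1, h2, h3, h4] <;> linarith [hfg s]
      have hA : q A = p YA + ∑ s ∈ A \ YA, f s - ∑ s ∈ YA \ A, g s := by
        rw [hqX A]; exact hYA
      have hB : q B = p YB + ∑ s ∈ B \ YB, f s - ∑ s ∈ YB \ B, g s := by
        rw [hqX B]; exact hYB
      rw [hA, hB]
      linarith
    have hq0 : q ∅ ≤ 0 := (hqle ∅).trans (le_of_eq hb0)
    obtain ⟨x, hx⟩ := sandwich_aux (Finset.univ : Finset S) q b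
      (fun X Y _ _ => hqsuper X Y) (fun X Y _ _ => hsub X Y)
      (fun Z _ => hqle Z) hq0 (le_of_eq hb0.symm)
    have hx' : ∀ Z : Finset S, q Z ≤ ∑ s ∈ Z, x s ∧ ∑ s ∈ Z, x s ≤ b Z :=
      fun Z => hx Z (Finset.subset_univ Z)
    have hsum0 : ∑ s, x s = 0 := by
      have h1 := (hx' Finset.univ).2
      have h2 := (hqge Finset.univ).trans (hx' Finset.univ).1
      rw [hbS] at h1
      rw [hpS] at h2
      linarith
    refine ⟨x, hsum0, fun Z => ⟨(hqge Z).trans (hx' Z).1, (hx' Z).2⟩, fun s => ⟨?_, ?_⟩⟩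
    · have h1 : p ∅ + ∑ t ∈ {s} \ ∅, f t - ∑ t ∈ ∅ \ {s}, g t ≤ q {s} := by
        rw [hqX]
        exact le_sup' (fun Y => p Y + ∑ t ∈ {s} \ Y, f t - ∑ t ∈ Y \ {s}, g t)
          (Finset.mem_univ ∅)
      have h2 := (hx' {s}).1
      rw [Finset.sum_singleton] at h2
      simp only [Finset.sdiff_empty, Finset.empty_sdiff, Finset.sum_singleton,
        Finset.sum_empty, hp0] at h1
      linarith
    · have hd1 : (Finset.univ.erase s) \ Finset.univ = ∅ := by simp
      have hd2 : Finset.univ \ (Finset.univ.erase s) = {s} := by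
        ext t
        simp [Finset.mem_sdiff, Finset.mem_erase, eq_comm]
      have h1 : p Finset.univ + ∑ t ∈ (Finset.univ.erase s) \ Finset.univ, f t
          - ∑ t ∈ Finset.univ \ (Finset.univ.erase s), g t ≤ q (Finset.univ.erase s) := by
        rw [hqX]
        exact le_sup' (fun Y => p Y + ∑ t ∈ (Finset.univ.erase s) \ Y, f t - ∑ t ∈ Y \ (Finset.univ.erase s), g t)
          (Finset.mem_univ Finset.univ)
      rw [hd1, hd2, hpS, Finset.sum_empty, Finset.sum_singleton] at h1
      have h2 := (hx' (Finset.univ.erase s)).1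
      have h3 : x s + ∑ t ∈ Finset.univ.erase s, x t = ∑ t, x t :=
        Finset.add_sum_erase Finset.univ x (Finset.mem_univ s)
      rw [hsum0] at h3
      linarith
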